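/- Hermite multinomial theorem: let β_1, …, β_t ∈ ℝ satisfy ∑_{i=1}^t β_i² = 1 and let d ∈ ℕ. Then for the normalized probabilists' Hermite polynomials H_d (orthonormal with respect to the standard Gaussian measure), H_d(β_1 X_1 + ⋯ + β_t X_t) = ∑_{d_1+⋯+d_t = d, d_i ≥ 0} √(d!/(d_1!⋯d_t!)) · ∏_{i=1}^t β_i^{d_i} H_{d_i}(X_i) as an identity of polynomials in X_1, …, X_t. -/

import Mathlib

open Polynomial PowerSeries Finset

noncomputable def Eop (f : PowerSeries ℝ) : PowerSeries ℝ :=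
  PowerSeries.mk fun n => if Even n then PowerSeries.coeff (n / 2) f else 0

lemma coeff_Eop (f : PowerSeries ℝ) (n : ℕ) :
    PowerSeries.coeff n (Eop f) = if Even n then PowerSeries.coeff (n / 2) f else 0 :=
  PowerSeries.coeff_mk _ _

lemma Eop_mul (f g : PowerSeries ℝ) : Eop f * Eop g = Eop (f * g) := by
  ext n
  rw [PowerSeries.coeff_mul, coeff_Eop]
  rcases Nat.even_or_odd n with hn | hn
  · obtain ⟨m, hm⟩ := hn
    have hm2 : n = 2 * m := by omega
    subst hm2
    rw [if_pos (even_two_mul m)]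
    have h2 : (2 * m) / 2 = m := by omega
    rw [h2, PowerSeries.coeff_mul]
    set emb : ℕ × ℕ ↪ ℕ × ℕ :=
      ⟨fun p => (2 * p.1, 2 * p.2), by intro p q h; simp only [Prod.mk.injEq] at h
                                       exact Prod.ext (by omega) (by omega)⟩ with hemb
    rw [show (∑ p ∈ Finset.HasAntidiagonal.antidiagonal (2 * m),
        PowerSeries.coeff p.1 (Eop f) * PowerSeries.coeff p.2 (Eop g)) =
        ∑ p ∈ (Finset.HasAntidiagonal.antidiagonal m).map emb,
        PowerSeries.coeff p.1 (Eop f) * PowerSeries.coeff p.2 (Eop g) from ?_]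
    · rw [Finset.sum_map]
      apply Finset.sum_congr rfl
      intro p hp
      simp only [hemb, Function.Embedding.coeFn_mk, coeff_Eop]
      show (if Even (2 * p.1) then PowerSeries.coeff (2 * p.1 / 2) f else 0) *
          (if Even (2 * p.2) then PowerSeries.coeff (2 * p.2 / 2) g else 0) = _
      rw [if_pos (even_two_mul p.1), if_pos (even_two_mul p.2)]
      have e1 : 2 * p.1 / 2 = p.1 := by omega
      have e2 : 2 * p.2 / 2 = p.2 := by omega
      rw [e1, e2]
    · refine (Finset.sum_subset ?_ ?_).symm
      · intro p hp
        simp only [Finset.mem_map, Finset.HasAntidiagonal.mem_antidiagonal, hemb,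
          Function.Embedding.coeFn_mk] at hp ⊢
        obtain ⟨q, hq, rfl⟩ := hp
        show 2 * q.1 + 2 * q.2 = 2 * m
        omega
      · intro p hp hnp
        simp only [Finset.HasAntidiagonal.mem_antidiagonal] at hp
        rcases Nat.even_or_odd p.1 with h1 | h1
        · rcases Nat.even_or_odd p.2 with h2 | h2
          · exfalso
            apply hnp
            simp only [Finset.mem_map, Finset.HasAntidiagonal.mem_antidiagonal, hemb,
              Function.Embedding.coeFn_mk]
            obtain ⟨a, ha⟩ := h1
            obtain ⟨b, hb⟩ := h2
            exact ⟨(a, b), by omega, Prod.ext (by show 2 * a = p.1; omega) (by show 2 * b = p.2; omega)⟩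
          · rw [coeff_Eop g, if_neg (Nat.not_even_iff_odd.mpr h2), mul_zero]
        · rw [coeff_Eop f, if_neg (Nat.not_even_iff_odd.mpr h1), zero_mul]
  · rw [if_neg (Nat.not_even_iff_odd.mpr hn)]
    apply Finset.sum_eq_zero
    intro p hp
    simp only [Finset.HasAntidiagonal.mem_antidiagonal] at hp
    rcases Nat.even_or_odd p.1 with h1 | h1
    · have h2 : ¬ Even p.2 := by
        intro h2
        exact (Nat.not_even_iff_odd.2 hn) (hp ▸ h1.add h2)
      rw [coeff_Eop g, if_neg h2, mul_zero]
    · rw [coeff_Eop f, if_neg (Nat.not_even_iff_odd.2 h1), zero_mul]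

lemma Eop_one : Eop 1 = 1 := by
  ext n
  rw [coeff_Eop, PowerSeries.coeff_one, PowerSeries.coeff_one]
  rcases Nat.eq_zero_or_pos n with rfl | hn
  · simp
  · rcases Nat.even_or_odd n with he | ho
    · obtain ⟨m, hm⟩ := he
      rw [if_pos ⟨m, hm⟩, if_neg (by omega : ¬ n / 2 = 0), if_neg (by omega : ¬ n = 0)]
    · rw [if_neg (Nat.not_even_iff_odd.2 ho), if_neg (by omega : ¬ n = 0)]

noncomputable def Gs(a : ℝ) : PowerSeries ℝ :=
  Eop (PowerSeries.rescale (-a / 2) (PowerSeries.exp ℝ))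

lemma coeff_Gs (a : ℝ) (n : ℕ) :
    PowerSeries.coeff n (Gs a) =
      if Even n then (-a / 2) ^ (n / 2) / (n / 2).factorial else 0 := by
  rw [Gs, coeff_Eop]
  congr 1
  rw [PowerSeries.coeff_rescale, PowerSeries.coeff_exp]
  push_cast
  ring

lemma Gs_mul (a b : ℝ) : Gs a * Gs b = Gs (a + b) := by
  rw [Gs, Gs, Gs, Eop_mul, PowerSeries.exp_mul_exp_eq_exp_add]
  ring_nf

lemma Gs_zero : Gs 0 = 1 := by
  rw [Gs]
  have : (-(0:ℝ) / 2) = 0 := by ring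
  rw [this, PowerSeries.rescale_zero]
  simp [Eop_one]

lemma Gs_rescale (c a : ℝ) : PowerSeries.rescale c (Gs a) = Gs (a * c ^ 2) := by
  ext n
  rw [PowerSeries.coeff_rescale, coeff_Gs, coeff_Gs]
  rcases Nat.even_or_odd n with he | ho
  · obtain ⟨m, hm⟩ := he
    have hn : n = 2 * m := by omega
    subst hn
    rw [if_pos (even_two_mul m), if_pos (even_two_mul m)]
    have h2 : 2 * m / 2 = m := by omega
    rw [h2]
    rw [pow_mul]
    field_simp
    ring
  · rw [if_neg (Nat.not_even_iff_odd.2 ho), if_neg (Nat.not_even_iff_odd.2 ho), mul_zero]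

lemma Gs_prod {ι : Type*} (s : Finset ι) (c : ι → ℝ) :
    ∏ i ∈ s, Gs (c i) = Gs (∑ i ∈ s, c i) := by
  induction s using Finset.cons_induction with
  | empty => simp [Gs_zero]
  | cons i s hi ih => rw [Finset.prod_cons, Finset.sum_cons, ih, Gs_mul]

lemma exp_prod {ι : Type*} (s : Finset ι) (c : ι → ℝ) :
    ∏ i ∈ s, PowerSeries.rescale (c i) (PowerSeries.exp ℝ) =
      PowerSeries.rescale (∑ i ∈ s, c i) (PowerSeries.exp ℝ) := by
  induction s using Finset.cons_induction with
  | empty =>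
      simp only [Finset.prod_empty, Finset.sum_empty, PowerSeries.rescale_zero]
      simp
  | cons i s hi ih =>
      rw [Finset.prod_cons, Finset.sum_cons, ih, PowerSeries.exp_mul_exp_eq_exp_add]

lemma algQ (q : ℚ) : algebraMap ℚ ℝ q = (q : ℝ) := eq_ratCast _ q

noncomputable def Fh (y : ℝ) : PowerSeries ℝ :=
  PowerSeries.mk fun n => (aeval y (Polynomial.hermite n)) / n.factorial

lemma fact_double (j : ℕ) :
    (2 * j).factorial = 2 ^ j * j.factorial * Nat.doubleFactorial (2 * j - 1) := by
  cases j with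
  | zero => rfl
  | succ j =>
      have h1 : 2 * (j + 1) = (2 * j + 1) + 1 := by ring
      rw [h1, Nat.factorial_eq_mul_doubleFactorial]
      rw [show 2 * j + 1 + 1 = 2 * (j + 1) from by ring, Nat.doubleFactorial_two_mul]
      rw [show 2 * (j + 1) - 1 = 2 * j + 1 from by omega]

lemma hermite_coeff_div (n k : ℕ) (hk : k ≤ n) :
    ((Polynomial.hermite n).coeff k : ℝ) / n.factorial =
      (1 / (k.factorial : ℝ)) *
        (if Even (n - k) then ((-1 : ℝ) / 2) ^ ((n - k) / 2) / (((n - k) / 2).factorial : ℝ) else 0) := by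
  have hpar : Even (n + k) ↔ Even (n - k) := by
    rw [Nat.even_add, Nat.even_sub hk]
  rcases Nat.even_or_odd (n - k) with he | ho
  · obtain ⟨j, hj⟩ := he
    have hnk : n - k = 2 * j := by omega
    have hco : (Polynomial.hermite n).coeff k =
        (-1) ^ j * (Nat.doubleFactorial (2 * j - 1) : ℤ) * n.choose k := by
      rw [Polynomial.coeff_hermite, if_pos (hpar.2 ⟨j, hj⟩), hnk]
      norm_num
    rw [hco, if_pos ⟨j, hj⟩]
    have h2 : (n - k) / 2 = j := by omega
    rw [h2]
    have hfac : (n.factorial : ℝ) =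
        n.choose k * k.factorial * (2 ^ j * j.factorial * Nat.doubleFactorial (2 * j - 1)) := by
      rw [← Nat.choose_mul_factorial_mul_factorial hk, hnk, fact_double]
      push_cast; ring
    have hd : ((Nat.doubleFactorial (2 * j - 1)) : ℝ) ≠ 0 :=
      Nat.cast_ne_zero.2 (Nat.doubleFactorial_pos _).ne'
    have hch : ((n.choose k : ℕ) : ℝ) ≠ 0 := Nat.cast_ne_zero.2 (Nat.choose_pos hk).ne'
    have hkf : ((k.factorial : ℕ) : ℝ) ≠ 0 := Nat.cast_ne_zero.2 k.factorial_ne_zero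
    have hjf : ((j.factorial : ℕ) : ℝ) ≠ 0 := Nat.cast_ne_zero.2 j.factorial_ne_zero
    rw [hfac]
    push_cast
    field_simp
    rw [← mul_pow]; norm_num
  · rw [Polynomial.coeff_hermite, if_neg (fun h => (Nat.not_even_iff_odd.2 ho) (hpar.1 h)),
      if_neg (Nat.not_even_iff_odd.2 ho)]
    simp

lemma hermite_egf (y : ℝ) :
    Fh y = PowerSeries.rescale y (PowerSeries.exp ℝ) * Gs 1 := by
  ext n
  rw [PowerSeries.coeff_mul, Finset.Nat.sum_antidiagonal_eq_sum_range_succ_mk]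
  rw [Fh, PowerSeries.coeff_mk]
  have haev : aeval y (Polynomial.hermite n) =
      ∑ k ∈ Finset.range (n + 1), ((Polynomial.hermite n).coeff k : ℝ) * y ^ k := by
    rw [Polynomial.aeval_def, Polynomial.eval₂_eq_sum_range' (n := n + 1)]
    · simp [mul_comm]
    · rw [Polynomial.natDegree_hermite]; omega
  rw [haev, Finset.sum_div]
  apply Finset.sum_congr rfl
  intro k hk
  have hkn : k ≤ n := Nat.lt_succ_iff.1 (Finset.mem_range.1 hk)
  dsimp only
  rw [PowerSeries.coeff_rescale, PowerSeries.coeff_exp, coeff_Gs, algQ]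
  rw [mul_comm ((((Polynomial.hermite n).coeff k) : ℤ) : ℝ), mul_div_assoc,
    hermite_coeff_div n k hkn]
  push_cast
  ring

lemma Fh_key (t : ℕ) (β : Fin t → ℝ) (hβ : ∑ i, (β i) ^ 2 = 1) (x : Fin t → ℝ) :
    Fh (∑ i, β i * x i) = ∏ i, PowerSeries.rescale (β i) (Fh (x i)) := by
  have step : ∀ i : Fin t, PowerSeries.rescale (β i) (Fh (x i)) =
      PowerSeries.rescale (β i * x i) (PowerSeries.exp ℝ) * Gs ((β i) ^ 2) := by
    intro i
    rw [hermite_egf, map_mul, PowerSeries.rescale_rescale, Gs_rescale, one_mul, mul_comm (x i)]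
  calc Fh (∑ i, β i * x i)
      = PowerSeries.rescale (∑ i, β i * x i) (PowerSeries.exp ℝ) * Gs 1 := hermite_egf _
    _ = (∏ i, PowerSeries.rescale (β i * x i) (PowerSeries.exp ℝ)) * Gs (∑ i, (β i) ^ 2) := by
        rw [exp_prod, hβ]
    _ = (∏ i, PowerSeries.rescale (β i * x i) (PowerSeries.exp ℝ)) * ∏ i, Gs ((β i) ^ 2) := by
        rw [Gs_prod]
    _ = ∏ i, (PowerSeries.rescale (β i * x i) (PowerSeries.exp ℝ) * Gs ((β i) ^ 2)) := by
        rw [Finset.prod_mul_distrib]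
    _ = ∏ i, PowerSeries.rescale (β i) (Fh (x i)) := by
        exact (Finset.prod_congr rfl fun i _ => (step i).symm)

lemma sqrt_prod_eq {ι : Type*} (s : Finset ι) (c : ι → ℕ) :
    ∏ i ∈ s, Real.sqrt (c i) = Real.sqrt (∏ i ∈ s, (c i : ℝ)) := by
  induction s using Finset.cons_induction with
  | empty => simp
  | cons i s hi ih =>
      rw [Finset.prod_cons, Finset.prod_cons, ih,
        ← Real.sqrt_mul (by positivity) (∏ j ∈ s, ((c j : ℝ)))]

noncomputable def normHermite (r : ℕ) (y : ℝ) : ℝ :=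
  (aeval y (Polynomial.hermite r)) / Real.sqrt (r.factorial)

/-- (Hermite multinomial theorem.)  If `∑ βᵢ² = 1`, then
`H_d(β₁X₁ + ⋯ + β_tX_t)
  = ∑_{d₁+⋯+d_t=d} √(d!/(d₁!⋯d_t!)) ∏ᵢ βᵢ^{dᵢ} H_{dᵢ}(Xᵢ)`. -/
theorem hermite_multinomial
    (t : ℕ) (β : Fin t → ℝ) (hβ : ∑ i, (β i) ^ 2 = 1) (d : ℕ)
    (x : Fin t → ℝ) :
    normHermite d (∑ i, β i * x i) =
      ∑ m ∈ Finset.Nat.antidiagonalTuple t d,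
        Real.sqrt ((d.factorial : ℝ) / ∏ i, ((m i).factorial : ℝ)) *
          ∏ i, β i ^ (m i) * normHermite (m i) (x i) := by
  classical
  -- unnormalized identity
  have key := congrArg (PowerSeries.coeff d) (Fh_key t β hβ x)
  rw [PowerSeries.coeff_prod] at key
  rw [Fh, PowerSeries.coeff_mk] at key
  -- convert finsuppAntidiag sum to antidiagonalTuple sum
  have conv : (∑ l ∈ Finset.finsuppAntidiag (Finset.univ : Finset (Fin t)) d,
        ∏ i, PowerSeries.coeff (l i) (PowerSeries.rescale (β i) (Fh (x i)))) =
      ∑ m ∈ Finset.Nat.antidiagonalTuple t d,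
        ∏ i, β i ^ (m i) * (aeval (x i) (Polynomial.hermite (m i)) / (m i).factorial) := by
    refine Finset.sum_nbij' (fun l => (l : Fin t → ℕ))
      (fun m => Finsupp.equivFunOnFinite.symm m) ?_ ?_ ?_ ?_ ?_
    · intro l hl
      rw [Finset.mem_finsuppAntidiag] at hl
      rw [Finset.Nat.mem_antidiagonalTuple]
      exact hl.1
    · intro m hm
      rw [Finset.Nat.mem_antidiagonalTuple] at hm
      rw [Finset.mem_finsuppAntidiag]
      exact ⟨by simpa using hm, Finset.subset_univ _⟩
    · intro l _
      exact Finsupp.equivFunOnFinite.symm_apply_apply l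
    · intro m _
      exact Finsupp.equivFunOnFinite.apply_symm_apply m
    · intro l _
      refine Finset.prod_congr rfl fun i _ => ?_
      rw [PowerSeries.coeff_rescale, Fh, PowerSeries.coeff_mk]
  rw [conv] at key
  -- now key : He_d(∑βx)/d! = ∑_m ∏ βᵢ^mᵢ Heᵢ/mᵢ!
  have factpos : (0:ℝ) < (d.factorial : ℝ) := by exact_mod_cast d.factorial_pos
  have sqpos : (0:ℝ) < Real.sqrt (d.factorial : ℝ) := Real.sqrt_pos.2 factpos
  rw [normHermite]
  have hsq : Real.sqrt (d.factorial : ℝ) * Real.sqrt (d.factorial : ℝ) = (d.factorial : ℝ) :=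
    Real.mul_self_sqrt factpos.le
  rw [div_eq_iff factpos.ne'] at key
  rw [div_eq_iff sqpos.ne', key, Finset.sum_mul, Finset.sum_mul]
  refine Finset.sum_congr rfl fun m hm => ?_
  -- termwise : (∏ βᵢ^mᵢ Heᵢ/mᵢ!) * d! = √(d!/∏m!) * ∏ βᵢ^mᵢ Heᵢ/√(mᵢ!) * √(d!)
  have hmf : ∀ i, (0:ℝ) < ((m i).factorial : ℝ) := fun i => by
    exact_mod_cast (m i).factorial_pos
  set Q : ℝ := ∏ i, ((m i).factorial : ℝ) with hQ
  have hQpos : (0:ℝ) < Q := Finset.prod_pos fun i _ => hmf i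
  have hsqQpos : (0:ℝ) < Real.sqrt Q := Real.sqrt_pos.2 hQpos
  set N : ℝ := ∏ i, β i ^ m i * aeval (x i) (Polynomial.hermite (m i)) with hN
  have h1 : (∏ i, β i ^ m i * normHermite (m i) (x i)) = N / Real.sqrt Q := by
    rw [hN, hQ, ← sqrt_prod_eq, ← Finset.prod_div_distrib]
    refine Finset.prod_congr rfl fun i _ => ?_
    rw [normHermite, mul_div_assoc]
  have h2 : (∏ i, β i ^ m i * (aeval (x i) (Polynomial.hermite (m i)) / ((m i).factorial : ℝ)))
      = N / Q := by
    rw [hN, hQ, ← Finset.prod_div_distrib]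
    refine Finset.prod_congr rfl fun i _ => ?_
    rw [mul_div_assoc]
  have h3 : Real.sqrt ((d.factorial : ℝ) / Q) = Real.sqrt (d.factorial : ℝ) / Real.sqrt Q :=
    Real.sqrt_div factpos.le Q
  have h5 : Real.sqrt Q * Real.sqrt Q = Q := Real.mul_self_sqrt hQpos.le
  rw [h1, h2, h3, ← hsq, ← h5]
  field_simp
  ring_nf
  rw [Real.sqrt_sq hsqQpos.le, Real.sq_sqrt hQpos.le, Real.sq_sqrt factpos.le]
  linear_combination (-(N * Q)) * hsq
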